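/- Let x′ ∈ {0,1}^{n′}, let Z = {z^1,…,z^R} be any multiset of R traces of x′, let w be the output of BMA(n′, Z), and suppose t > M is an integer with w_{[0:t−1]} = x′_{[0:t−1]}. If i ∈ [R] satisfies distance_i(t−M) = 0 and D_i ∩ [position_i(t−M)+1 : position_i(t−M)+M] = D_i ∩ [t−M : t] = ∅, then distance_i(t) = 0. -/

import Mathlib

open scoped Classical

namespace TraceRec

/-- The subword `x_{[a:b]} = (x_a, …, x_b)` of a string. -/
def subword (x : List Bool) (a b : ℕ) : List Bool := (x.drop a).take (b + 1 - a)

/-- The trace of `x` obtained by deleting the coordinates in the deletion set `D`. -/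
def trace (x : List Bool) (D : Finset ℕ) : List Bool :=
  ((List.range x.length).filter (fun i => decide (i ∉ D))).map (fun i => x.getD i false)

/-- Probability weight of the deletion set `D` for an `n`-bit string at deletion rate `δ`:
each of the `n` coordinates is deleted independently with probability `δ`. -/
noncomputable def delWeight (δ : ℝ) (n : ℕ) (D : Finset ℕ) : ℝ :=
  δ ^ D.card * (1 - δ) ^ (n - D.card)

/-- Probability, over `N` independent deletion sets for an `n`-bit string, of event `P`. -/
noncomputable def prSets (δ : ℝ) (n N : ℕ) (P : (Fin N → Finset ℕ) → Prop) : ℝ :=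
  ∑ Ds ∈ Fintype.piFinset (fun _ : Fin N => (Finset.range n).powerset),
    (∏ i, delWeight δ n (Ds i)) * (if P Ds then 1 else 0)

/-- Probability of event `P` over `N` independent traces of `x` drawn from `Del_δ(x)`. -/
noncomputable def prTraces (δ : ℝ) (x : List Bool) (N : ℕ)
    (P : (Fin N → List Bool) → Prop) : ℝ :=
  prSets δ x.length N (fun Ds => P (fun i => trace x (Ds i)))

/-- Probability of event `P` over one trace of `x` drawn from `Del_δ(x)`. -/
noncomputable def prOne (δ : ℝ) (x : List Bool) (P : List Bool → Prop) : ℝ :=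
  prTraces δ x 1 (fun ys => P (ys 0))

/-- The set of all binary strings of length `n`. -/
def binStrings (n : ℕ) : Finset (List Bool) :=
  Finset.image (fun f : Fin n → Bool => List.ofFn f) Finset.univ

/-- Majority bit of `N` bits. -/
def majority (N : ℕ) (b : Fin N → Bool) : Bool :=
  decide (N ≤ 2 * (Finset.univ.filter (fun i => b i = true)).card)

/-- Padding of a trace with `0`s (`false`) at the end. -/
def pad (z : List Bool) : ℕ → Bool := fun j => z.getD j false

/-- The pointers `current_i(t)` in the Bitwise Majority Alignment algorithm. -/
def bmaCur (N : ℕ) (u : Fin N → ℕ → Bool) : ℕ → Fin N → ℕ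
  | 0 => fun _ => 0
  | t + 1 => fun i =>
      let c := bmaCur N u t
      if u i (c i) = majority N (fun j => u j (c j)) then c i + 1 else c i

/-- The bit `w_t` output by BMA at round `t`. -/
def bmaBit (N : ℕ) (u : Fin N → ℕ → Bool) (t : ℕ) : Bool :=
  majority N (fun j => u j (bmaCur N u t j))

/-- The Bitwise Majority Alignment algorithm on `N` traces, run for `n'` rounds. -/
def BMA (n' N : ℕ) (z : Fin N → List Bool) : List Bool :=
  (List.range n').map (fun t => bmaBit N (fun i => pad (z i)) t)

/-- `fmap D j`: the original position of the `j`-th surviving bit under deletion set `D`,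
i.e. the unique `k ∉ D` with `k - |D ∩ [0:k-1]| = j`. -/
noncomputable def fmap (D : Finset ℕ) (j : ℕ) : ℕ := Nat.nth (fun k => k ∉ D) j

/-- `position_i(t) = f_i(current_i(t))` in the run of BMA. -/
noncomputable def positionOf {R : ℕ} (z : Fin R → List Bool) (D : Fin R → Finset ℕ)
    (t : ℕ) (i : Fin R) : ℕ :=
  fmap (D i) (bmaCur R (fun i => pad (z i)) t i)

/-- `distance_i(t) = position_i(t) - t` in the run of BMA. -/
noncomputable def distOf {R : ℕ} (z : Fin R → List Bool) (D : Fin R → Finset ℕ)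
    (t : ℕ) (i : Fin R) : ℤ :=
  (positionOf z D t i : ℤ) - t

/-- `z` is a prefix of the infinite periodic string `s^∞`. -/
def periodicPrefix (s z : List Bool) : Prop :=
  ∀ j < z.length, z.getD j false = s.getD (j % s.length) false

/-- `z` is an `s`-desert for some nonempty `s` of length at most `C`
(with desert length threshold `M`). -/
def isDesert (C M : ℕ) (z : List Bool) : Prop :=
  ∃ s : List Bool, s ≠ [] ∧ s.length ≤ C ∧ M ≤ z.length ∧ periodicPrefix s z

/-- Location `i` of `x` is deep in a desert: `x_{[i-m:i+m]}` is a desert. -/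
def deepInDesert (C m : ℕ) (x : List Bool) (i : ℕ) : Prop :=
  m ≤ i ∧ isDesert C (2 * m + 1) (subword x (i - m) (i + m))

/-- `x` has a desert: some subword of `x` is a desert. -/
def hasDesert (C M : ℕ) (x : List Bool) : Prop :=
  ∃ a b, isDesert C M (subword x a b)

/-- `r` is the first location of `x` that is deep in a desert. -/
def firstDeep (C m : ℕ) (x : List Bool) (r : ℕ) : Prop :=
  deepInDesert C m x r ∧ ∀ i < r, ¬ deepInDesert C m x i

/-- The deletion rate `δ = n^{-(1/3+ε)}`. -/
noncomputable def delta (ε : ℝ) (n : ℕ) : ℝ := (n : ℝ) ^ (-(1/3 + ε))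

/-- `C = ⌈100/ε⌉`. -/
noncomputable def Cp (ε : ℝ) : ℕ := ⌈(100 : ℝ) / ε⌉₊

/-- `m = ⌈n^{1/3}⌉`. -/
noncomputable def mp (n : ℕ) : ℕ := ⌈(n : ℝ) ^ ((1 : ℝ) / 3)⌉₊

/-- `M = 2m + 1`. -/
noncomputable def Mp (n : ℕ) : ℕ := 2 * mp n + 1

/-- `σ = ⌈√(δn)·log n⌉`. -/
noncomputable def sigp (ε : ℝ) (n : ℕ) : ℕ :=
  ⌈Real.sqrt (delta ε n * n) * Real.log n⌉₊

/-- A family of deletion sets (for traces of an `n'`-bit string) is good. -/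
def goodFam (C M n' : ℕ) {R : ℕ} (D : Fin R → Finset ℕ) : Prop :=
  (∀ i : Fin R, ∀ a, a + 2 * C ^ 2 * M ≤ n' →
      (D i ∩ Finset.Ico a (a + 2 * C ^ 2 * M)).card ≤ C) ∧
  (∀ a, a + (M + C + 1) ≤ n' →
      ((Finset.univ.filter
          (fun i : Fin R => (D i ∩ Finset.Ico a (a + (M + C + 1))).Nonempty)).card : ℝ)
        ≤ (R : ℝ) / (C : ℝ) ^ 3)

/-- Two tuples of strings are `η`-close as multisets: one is obtained from the other by
substituting at most `ηN` of its strings. -/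
def closeTuples (η : ℝ) {N : ℕ} (z z' : Fin N → List Bool) : Prop :=
  ∃ π : Equiv.Perm (Fin N),
    ((Finset.univ.filter (fun i => z i ≠ z' (π i))).card : ℝ) ≤ η * N

/-- `s` is a minimal-length pattern for the desert `x_{[r-m:r+m]}` around location `r`. -/
def minimalPattern (C m : ℕ) (x : List Bool) (r : ℕ) (s : List Bool) : Prop :=
  s ≠ [] ∧ s.length ≤ C ∧ periodicPrefix s (subword x (r - m) (r + m)) ∧
    ∀ s' : List Bool, s' ≠ [] → periodicPrefix s' (subword x (r - m) (r + m)) →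
      s.length ≤ s'.length

/-- `e` is the end position of the desert containing `x_r` (for pattern length `k`):
the smallest integer `≥ r + m` such that `x_{e+1} ≠ x_{e+1-k}`. -/
def isEnd (x : List Bool) (r m k e : ℕ) : Prop :=
  r + m ≤ e ∧ x.getD (e + 1) false ≠ x.getD (e + 1 - k) false ∧
    ∀ j, r + m ≤ j → j < e → x.getD (j + 1) false = x.getD (j + 1 - k) false

/-- The tail string `tail = x_{[end-k+2 : end-k+8σ+1]}` of the desert. -/
def tailStr (x : List Bool) (k e σ : ℕ) : List Bool :=
  subword x (e - k + 2) (e - k + 8 * σ + 1)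

/-- `last(y)` for the trace of `x` with deletion set `D`: the position in the trace of the
last surviving bit of `x_{[0:e]}`, or `-1` if all of `x_{[0:e]}` is deleted. -/
def lastPos (D : Finset ℕ) (e : ℕ) : ℤ :=
  (((Finset.range (e + 1)).filter (fun i => decide (i ∉ D))).card : ℤ) - 1

/-- `w ∈ Cyc_s`: `w` is a cyclic shift of `s`. -/
def inCyc (s w : List Bool) : Prop := ∃ j, w = s.rotate j

/-- `sig` is the signature of the desert of `x` with pattern `s` ending at `e`. -/
def isSig (x s : List Bool) (e σ : ℕ) (sig : List Bool) : Prop :=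
  (∃ d, e + s.length + 1 ≤ d ∧ d ≤ e + 8 * σ - s.length + 1 ∧
      ¬ inCyc s (subword x (d + 1 - s.length) d) ∧
      (∀ d', e + s.length + 1 ≤ d' → d' < d → inCyc s (subword x (d' + 1 - s.length) d')) ∧
      sig = subword x (e - s.length + 2) d) ∨
  ((∀ d, e + s.length + 1 ≤ d → d ≤ e + 8 * σ - s.length + 1 →
      inCyc s (subword x (d + 1 - s.length) d)) ∧
    sig = tailStr x s.length e σ)

/-- A string `z` is in the right form `w ∘ sig`, where the leftmost `k`-bit subword of `z`
not in `Cyc_s` consists of the first `k` bits of the trailing occurrence of `sig`. -/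
def rightForm (s sig z : List Bool) : Prop :=
  ∃ w : List Bool, z = w ++ sig ∧
    ∀ a < w.length, inCyc s ((z.drop a).take s.length)


lemma filter_range_getElem (p : ℕ → Prop) [DecidablePred p] :
    ∀ (n j : ℕ) (h : j < ((List.range n).filter (fun k => decide (p k))).length),
    ((List.range n).filter (fun k => decide (p k)))[j] = Nat.nth p j := by
  intro n
  induction n with
  | zero => intro j h; simp at h
  | succ n ih =>
    intro j h
    simp only [List.range_succ, List.filter_append] at h ⊢
    set L := (List.range n).filter (fun k => decide (p k)) with hL
    by_cases hj : j < L.length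
    · rw [List.getElem_append_left hj]; exact ih j hj
    · have hpn : p n := by
        by_contra hp
        simp [hp] at h; omega
      have hcnt : L.length = Nat.count p n := by
        simp [hL, Nat.count, List.countP_eq_length_filter]
      have hj' : j = L.length := by
        simp [hpn] at h
        omega
      subst hj'
      rw [List.getElem_append_right (le_refl _)]
      simp [hpn, hcnt, Nat.nth_count hpn]

lemma trace_getD (x : List Bool) (D : Finset ℕ)
    (hinf : {k | k ∉ D}.Infinite) (j : ℕ)
    (h : Nat.nth (fun k => k ∉ D) j < x.length) :
    (trace x D).getD j false = x.getD (Nat.nth (fun k => k ∉ D) j) false := by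
  set p : ℕ → Prop := fun k => k ∉ D with hp
  set L := (List.range x.length).filter (fun k => decide (k ∉ D)) with hLdef
  have hlen : L.length = Nat.count p x.length := by
    rw [hLdef, Nat.count, List.countP_eq_length_filter]
  have hjlt : j < L.length := by
    rw [hlen]
    have h1 : Nat.count p (Nat.nth p j + 1) ≤ Nat.count p x.length :=
      Nat.count_monotone p h
    rw [Nat.count_nth_succ_of_infinite hinf] at h1
    omega
  have hmap : trace x D = L.map (fun i => x.getD i false) := rfl
  rw [hmap]
  rw [List.getD_eq_getElem _ _ (by simpa using hjlt)]
  rw [List.getElem_map]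
  rw [filter_range_getElem p _ _ hjlt]

/-- Lemma 11: a deletion-free window keeps an aligned trace aligned. -/
theorem statement8 (ε : ℝ) (hε : 0 < ε) (n n' R : ℕ) (hn' : n' ≤ n)
    (x' : List Bool) (hx' : x'.length = n')
    (D : Fin R → Finset ℕ) (hD : ∀ i, D i ⊆ Finset.range n')
    (z : Fin R → List Bool) (hz : ∀ i, z i = trace x' (D i))
    (t : ℕ) (ht : Mp n < t) (ht' : t ≤ n')
    (hw : subword (BMA n' R z) 0 (t - 1) = subword x' 0 (t - 1))
    (i : Fin R)
    (h0 : distOf z D (t - Mp n) i = 0)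
    (h1 : D i ∩ Finset.Icc (positionOf z D (t - Mp n) i + 1)
        (positionOf z D (t - Mp n) i + Mp n) = ∅)
    (h2 : D i ∩ Finset.Icc (t - Mp n) t = ∅) :
    distOf z D t i = 0 := by
  have hMt : Mp n ≤ t := le_of_lt ht
  set M := Mp n with hMdef
  set u : Fin R → ℕ → Bool := fun i => pad (z i) with hu
  set p : ℕ → Prop := fun k => k ∉ D i with hpdef
  have hinf : (setOf p).Infinite := by
    have hset : (setOf p) = (↑(D i) : Set ℕ)ᶜ := by ext k; simp [hpdef]; exact Iff.rfl
    rw [hset]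
    exact (D i).finite_toSet.infinite_compl
  have hpos0 : positionOf z D (t - M) i = t - M := by
    unfold distOf at h0
    omega
  have hwin : ∀ τ, t - M + 1 ≤ τ → τ ≤ t → τ ∉ D i := by
    intro τ hτ1 hτ2 hmem
    have hmem2 : τ ∈ D i ∩ Finset.Icc (positionOf z D (t - M) i + 1)
        (positionOf z D (t - M) i + M) := by
      rw [hpos0]
      exact Finset.mem_inter.mpr ⟨hmem, Finset.mem_Icc.mpr ⟨hτ1, by omega⟩⟩
    rw [h1] at hmem2
    exact absurd hmem2 (Finset.notMem_empty τ)
  have hwbit : ∀ τ, τ < t → bmaBit R u τ = x'.getD τ false := by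
    intro τ hτ
    have hτn' : τ < n' := by omega
    have hτb : τ < (BMA n' R z).length := by simp [BMA]; omega
    have hτx : τ < x'.length := by rw [hx']; omega
    have hsub : (BMA n' R z).take t = x'.take t := by
      have ht1 : t - 1 + 1 - 0 = t := by omega
      have hw2 := hw
      unfold subword at hw2
      simpa [ht1] using hw2
    have h2' : (BMA n' R z)[τ]? = x'[τ]? := by
      have h3 := congrArg (fun l => l[τ]?) hsub
      simpa [List.getElem?_take, hτ] using h3
    have hb : (BMA n' R z)[τ]? = some (bmaBit R u τ) := by
      rw [List.getElem?_eq_getElem hτb]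
      simp [BMA, hu]
    have hx2 : x'[τ]? = some (x'.getD τ false) := by
      rw [List.getElem?_eq_getElem hτx, List.getD_eq_getElem _ _ hτx]
    rw [hb, hx2] at h2'
    exact Option.some.inj h2'
  set c0 := bmaCur R u (t - M) i with hc0
  have hnth0 : Nat.nth p c0 = t - M := hpos0
  have key : ∀ d, d ≤ M →
      bmaCur R u (t - M + d) i = c0 + d ∧ Nat.nth p (c0 + d) = t - M + d := by
    intro d
    induction d with
    | zero => intro _; exact ⟨by simp [hc0], by simpa using hnth0⟩
    | succ d ih =>
      intro hd
      obtain ⟨hc, hn⟩ := ih (by omega)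
      have hτt : t - M + d < t := by omega
      have hnx : Nat.nth p (c0 + d) < x'.length := by rw [hn, hx']; omega
      have hu1 : u i (c0 + d) = x'.getD (t - M + d) false := by
        show pad (z i) (c0 + d) = _
        simp only [pad, hz i]
        rw [trace_getD _ _ hinf _ hnx, hn]
      have hcur : bmaCur R u (t - M + d + 1) i = c0 + d + 1 := by
        have hstep : bmaCur R u (t - M + d + 1) i =
            if u i (bmaCur R u (t - M + d) i) =
                majority R (fun j => u j (bmaCur R u (t - M + d) j)) then
              bmaCur R u (t - M + d) i + 1
            else bmaCur R u (t - M + d) i := rfl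
      
        have hmaj : majority R (fun j => u j (bmaCur R u (t - M + d) j)) =
            bmaBit R u (t - M + d) := rfl
        rw [hstep, hc, hmaj, hwbit _ hτt, hu1, if_pos rfl]
      have hp1 : p (t - M + d + 1) := hwin _ (by omega) (by omega)
      have hpτ : p (t - M + d) := by
        rw [← hn]; exact Nat.nth_mem_of_infinite hinf _
      have hcount : Nat.count p (t - M + d) = c0 + d := by
        have h4 := Nat.count_nth_of_infinite hinf (c0 + d)
        rw [hn] at h4
        exact h4
      have hnth1 : Nat.nth p (c0 + d + 1) = t - M + d + 1 := by
        have h3 := Nat.nth_count (p := p) hp1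
        rw [Nat.count_succ, if_pos hpτ, hcount] at h3
        exact h3
      constructor
      · rw [show t - M + (d + 1) = t - M + d + 1 by omega]
        rw [show c0 + (d + 1) = c0 + d + 1 by omega]
        exact hcur
      · rw [show t - M + (d + 1) = t - M + d + 1 by omega]
        rw [show c0 + (d + 1) = c0 + d + 1 by omega]
        exact hnth1
  obtain ⟨hc, hn⟩ := key M le_rfl
  have htM : t - M + M = t := by omega
  rw [htM] at hc hn
  have hfin : positionOf z D t i = t := by
    show Nat.nth p (bmaCur R u t i) = t
    rw [hc]
    exact hn
  unfold distOf
  rw [hfin]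
  exact sub_self _


end TraceRec
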